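/- arXiv:2602.05914 — 3 statements merged into one kernel-verified Lean document; each statement's English description precedes it below -/
import Mathlib

section
/- Fix n qubits and let U = ∏_{j=0}^{n-2} CZ_j be the cluster entangler. Let i ≥ 1 and m ≥ 0 be such that i + 2m + 1 ≤ n - 1, and let S = ∏_{k=0}^{m} X_{i+2k} be the product of single-site Pauli X operators at the sites i, i+2, …, i+2m. Then U * S = (Z_{i-1} * S * Z_{i+2m+1}) * U. -/
open Matrix

/-- The algebra of operators on `n` qubits: matrices indexed by configurations. -/
abbrev QubitOp (n : ℕ) := Matrix ((Fin n) → Fin 2) ((Fin n) → Fin 2) ℂ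

/-- The single-site operator acting as the `2 × 2` matrix `A` at site `j` and
trivially elsewhere. -/
noncomputable def siteOp {n : ℕ} (A : Matrix (Fin 2) (Fin 2) ℂ) (j : Fin n) :
    QubitOp n :=
  fun x y => A (x j) (y j) * ∏ k ∈ Finset.univ.erase j, (if x k = y k then (1 : ℂ) else 0)

/-- The Pauli `X` matrix. -/
def PauliX : Matrix (Fin 2) (Fin 2) ℂ := !![0, 1; 1, 0]

/-- The Pauli `Z` matrix. -/
def PauliZ : Matrix (Fin 2) (Fin 2) ℂ := !![1, 0; 0, -1]

/-- The controlled-Z gate acting on the (ordered) pair of sites `j`, `j'`. -/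
noncomputable def CZ {n : ℕ} (j j' : Fin n) : QubitOp n :=
  Matrix.diagonal (fun x => if x j = 1 ∧ x j' = 1 then (-1 : ℂ) else 1)

/-- The cluster entangler `U = ∏_{j=0}^{n-2} CZ_j` (ordered product of commuting
diagonal matrices). -/
noncomputable def clusterU (n : ℕ) : QubitOp n :=
  (((List.range (n - 1)).attach).map (fun j =>
    CZ (⟨j.1, by have := j.2; rw [List.mem_range] at this; omega⟩ : Fin n)
       (⟨j.1 + 1, by have := j.2; rw [List.mem_range] at this; omega⟩ : Fin n))).prod

/-- The string operator `S = ∏_{k=0}^{m} X_{i+2k}` (ordered product of commuting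
single-site Pauli `X` operators at the sites `i, i+2, …, i+2m`). -/
noncomputable def stringS (n i m : ℕ) (h : i + 2 * m + 1 ≤ n - 1) : QubitOp n :=
  (((List.range (m + 1)).attach).map (fun k =>
    siteOp PauliX
      (⟨i + 2 * k.1, by have := k.2; rw [List.mem_range] at this; omega⟩ : Fin n))).prod

/-! ### Auxiliary machinery -/

/-- The translation ("shift") matrix by a vector `v`. -/
noncomputable def Tm {n : ℕ} (v : (Fin n) → Fin 2) : QubitOp n :=
  fun x y => if y = x + v then 1 else 0

lemma Tm_zero {n : ℕ} : (Tm (0 : (Fin n) → Fin 2)) = 1 := by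
  funext x y
  simp [Tm, Matrix.one_apply, eq_comm]

lemma Tm_mul {n : ℕ} (v w : (Fin n) → Fin 2) : Tm v * Tm w = Tm (v + w) := by
  funext x y
  rw [Matrix.mul_apply, Finset.sum_eq_single (x + v)]
  · simp [Tm, add_assoc]
  · intro b _ hb; simp [Tm, hb]
  · simp

def zval : Fin 2 → ℂ := fun a => if a = 1 then -1 else 1

lemma zval_sq (a : Fin 2) : zval a * zval a = 1 := by
  fin_cases a <;> simp [zval]

lemma PauliX_apply (a b : Fin 2) : PauliX a b = if b = a + 1 then 1 else 0 := by
  fin_cases a <;> fin_cases b <;> simp [PauliX]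

lemma PauliZ_apply (a b : Fin 2) : PauliZ a b = if b = a then zval a else 0 := by
  fin_cases a <;> fin_cases b <;> simp [PauliZ, zval]

lemma siteOpX_eq {n : ℕ} (j : Fin n) : siteOp PauliX j = Tm (Pi.single j 1) := by
  funext x y
  simp only [siteOp, Tm, PauliX_apply]
  by_cases hy : y = x + Pi.single j 1
  · subst hy
    have h1 : (x + Pi.single j 1 : (Fin n) → Fin 2) j = x j + 1 := by simp
    rw [if_pos rfl, h1, if_pos rfl, one_mul]
    apply Finset.prod_eq_one
    intro k hk
    have hkj : k ≠ j := (Finset.mem_erase.mp hk).1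
    rw [if_pos]
    simp [Pi.single_eq_of_ne hkj]
  · rw [if_neg hy]
    by_cases hall : ∀ k, k ≠ j → x k = y k
    · have hj : y j ≠ x j + 1 := by
        intro hc
        apply hy
        funext k
        by_cases hkj : k = j
        · subst hkj; simp [hc]
        · simp [Pi.single_eq_of_ne hkj, (hall k hkj).symm]
      rw [if_neg hj, zero_mul]
    · push_neg at hall
      obtain ⟨k, hkj, hxk⟩ := hall
      rw [Finset.prod_eq_zero (Finset.mem_erase.mpr ⟨hkj, Finset.mem_univ k⟩)]
      · ring
      · rw [if_neg hxk]

lemma siteOpZ_eq {n : ℕ} (j : Fin n) :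
    siteOp PauliZ j = Matrix.diagonal (fun x => zval (x j)) := by
  funext x y
  simp only [siteOp, Matrix.diagonal_apply, PauliZ_apply]
  by_cases hxy : x = y
  · subst hxy
    rw [if_pos rfl, if_pos rfl]
    rw [Finset.prod_eq_one (fun k _ => if_pos rfl), mul_one]
  · rw [if_neg hxy]
    by_cases hj : y j = x j
    · have : ∃ k, k ≠ j ∧ x k ≠ y k := by
        by_contra hc
        push_neg at hc
        apply hxy
        funext k
        by_cases hkj : k = j
        · subst hkj; exact hj.symm
        · exact hc k hkj
      obtain ⟨k, hkj, hxk⟩ := this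
      rw [Finset.prod_eq_zero (Finset.mem_erase.mpr ⟨hkj, Finset.mem_univ k⟩)]
      · ring
      · rw [if_neg hxk]
    · rw [if_neg hj, zero_mul]

/-! ### list product lemmas -/

lemma diag_list_prod {n : ℕ} (l : List ℕ) (f : ℕ → (Fin n → Fin 2) → ℂ) :
    (l.map (fun j => Matrix.diagonal (f j))).prod
      = Matrix.diagonal (fun x => (l.map (fun j => f j x)).prod) := by
  induction l with
  | nil => simp
  | cons a t ih => simp [ih, Matrix.diagonal_mul_diagonal]

lemma attach_map_eq {α β : Type*} (l : List α) (f : {x // x ∈ l} → β) (g : α → β)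
    (h : ∀ a (ha : a ∈ l), f ⟨a, ha⟩ = g a) :
    l.attach.map f = l.map g := by
  rw [← List.attach_map_val (l := l) (f := g)]
  apply List.map_congr_left
  rintro ⟨a, ha⟩ _
  exact h a ha

lemma list_range_prod (N : ℕ) (f : ℕ → ℂ) :
    ((List.range N).map f).prod = ∏ j ∈ Finset.range N, f j := by
  induction N with
  | zero => simp
  | succ N ih => rw [List.range_succ, Finset.prod_range_succ, List.map_append,
      List.prod_append, ih]; simp

lemma Tm_list_prod {n : ℕ} (N : ℕ) (w : ℕ → (Fin n → Fin 2)) :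
    ((List.range N).map (fun k => Tm (w k))).prod = Tm (∑ k ∈ Finset.range N, w k) := by
  induction N with
  | zero => simp [Tm_zero]
  | succ N ih => rw [List.range_succ, Finset.sum_range_succ, List.map_append,
      List.prod_append, ih]; simp [Tm_mul]

/-! ### scalar functions -/

noncomputable def cfac (n j : ℕ) (x : Fin n → Fin 2) : ℂ :=
  if h : j + 1 < n then
    (if x ⟨j, by omega⟩ = 1 ∧ x ⟨j + 1, h⟩ = 1 then -1 else 1) else 1

noncomputable def ufun (n : ℕ) (x : Fin n → Fin 2) : ℂ :=
  ∏ j ∈ Finset.range (n - 1), cfac n j x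

noncomputable def eaux (n s : ℕ) : (Fin n → Fin 2) :=
  if h : s < n then Pi.single ⟨s, h⟩ 1 else 0

lemma cfac_sq {n j : ℕ} (x : Fin n → Fin 2) : cfac n j x * cfac n j x = 1 := by
  unfold cfac; split_ifs <;> norm_num

lemma add_eaux_ne {n s : ℕ} (x : Fin n → Fin 2) (k : Fin n) (hk : (k : ℕ) ≠ s) :
    (x + eaux n s) k = x k := by
  unfold eaux
  split_ifs with h
  · have : k ≠ ⟨s, h⟩ := by intro hc; apply hk; rw [hc]
    simp [Pi.single_eq_of_ne this]
  · simp

lemma add_eaux_self {n s : ℕ} (x : Fin n → Fin 2) (hs : s < n) :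
    (x + eaux n s) ⟨s, hs⟩ = x ⟨s, hs⟩ + 1 := by
  unfold eaux
  rw [dif_pos hs]
  simp

lemma cfac_eval {n : ℕ} (t : ℕ) (ht : t + 1 < n) (x : Fin n → Fin 2) :
    cfac n t x = (if x ⟨t, by omega⟩ = 1 ∧ x ⟨t + 1, ht⟩ = 1 then -1 else 1) := by
  unfold cfac; rw [dif_pos ht]

lemma cfac_add_eaux {n t s : ℕ} (x : Fin n → Fin 2) (h1 : t ≠ s) (h2 : t + 1 ≠ s) :
    cfac n t (x + eaux n s) = cfac n t x := by
  by_cases h : t + 1 < n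
  · rw [cfac_eval t h, cfac_eval t h,
      add_eaux_ne x ⟨t, by omega⟩ (by simpa using h1),
      add_eaux_ne x ⟨t + 1, h⟩ (by simpa using h2)]
  · unfold cfac; rw [dif_neg h, dif_neg h]

lemma s_pair1 (a b : Fin 2) :
    (if a = 1 ∧ b = 1 then (-1 : ℂ) else 1) * (if a = 1 ∧ b + 1 = 1 then -1 else 1)
      = zval a := by
  fin_cases a <;> fin_cases b <;> simp [zval]

lemma s_pair2 (b c : Fin 2) :
    (if b = 1 ∧ c = 1 then (-1 : ℂ) else 1) * (if b + 1 = 1 ∧ c = 1 then -1 else 1)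
      = zval c := by
  fin_cases b <;> fin_cases c <;> simp [zval]

lemma add_eaux_self' {n s : ℕ} (x : Fin n → Fin 2) (k : Fin n) (hk : (k : ℕ) = s) :
    (x + eaux n s) k = x k + 1 := by
  subst hk
  unfold eaux
  rw [dif_pos k.2]
  simp

lemma cfac_flip_left {n : ℕ} (t : ℕ) (ht : t + 1 < n) (y z : Fin n → Fin 2)
    (h1 : z ⟨t, by omega⟩ = y ⟨t, by omega⟩) (h2 : z ⟨t + 1, ht⟩ = y ⟨t + 1, ht⟩ + 1) :
    cfac n t y * cfac n t z = zval (y ⟨t, by omega⟩) := by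
  unfold cfac
  rw [dif_pos ht, dif_pos ht, h1, h2]
  exact s_pair1 _ _

lemma cfac_flip_right {n : ℕ} (t : ℕ) (ht : t + 1 < n) (y z : Fin n → Fin 2)
    (h1 : z ⟨t, by omega⟩ = y ⟨t, by omega⟩ + 1) (h2 : z ⟨t + 1, ht⟩ = y ⟨t + 1, ht⟩) :
    cfac n t y * cfac n t z = zval (y ⟨t + 1, ht⟩) := by
  unfold cfac
  rw [dif_pos ht, dif_pos ht, h1, h2]
  exact s_pair2 _ _

/-- Single-flip conjugation identity at the scalar level. -/
lemma flip_one (n j : ℕ) (hj1 : 1 ≤ j) (hj2 : j + 1 ≤ n - 1) (x : Fin n → Fin 2) :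
    ufun n x = zval (x ⟨j - 1, by omega⟩) * zval (x ⟨j + 1, by omega⟩)
      * ufun n (x + eaux n j) := by
  have hn : 2 ≤ n := by omega
  have hjn : j + 1 < n := by omega
  have hjm : j - 1 + 1 < n := by omega
  have key : ∀ t ∈ Finset.range (n - 1),
      cfac n t x = (cfac n t x * cfac n t (x + eaux n j)) * cfac n t (x + eaux n j) := by
    intro t _
    rw [mul_assoc, cfac_sq, mul_one]
  have h1 : ufun n x
      = (∏ t ∈ Finset.range (n - 1), cfac n t x * cfac n t (x + eaux n j))
      * ufun n (x + eaux n j) := by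
    unfold ufun
    rw [← Finset.prod_mul_distrib]
    exact Finset.prod_congr rfl key
  rw [h1]
  congr 1
  have hsub : ({j - 1, j} : Finset ℕ) ⊆ Finset.range (n - 1) := by
    intro t ht
    simp only [Finset.mem_insert, Finset.mem_singleton] at ht
    rcases ht with h | h <;> simp only [Finset.mem_range] <;> omega
  have houter : ∀ t ∈ Finset.range (n - 1), t ∉ ({j - 1, j} : Finset ℕ) →
      cfac n t x * cfac n t (x + eaux n j) = 1 := by
    intro t _ ht
    simp only [Finset.mem_insert, Finset.mem_singleton, not_or] at ht
    rw [cfac_add_eaux x (by omega) (by omega), cfac_sq]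
  rw [← Finset.prod_subset hsub (fun t ht hnt => houter t ht hnt)]
  have hne : j - 1 ≠ j := by omega
  rw [Finset.prod_pair hne]
  have e1 : cfac n (j - 1) x * cfac n (j - 1) (x + eaux n j)
      = zval (x ⟨j - 1, by omega⟩) :=
    cfac_flip_left (j - 1) hjm x (x + eaux n j)
      (add_eaux_ne x ⟨j - 1, by omega⟩ (by simp; omega))
      (add_eaux_self' x ⟨j - 1 + 1, hjm⟩ (by simp; omega))
  have e2 : cfac n j x * cfac n j (x + eaux n j) = zval (x ⟨j + 1, hjn⟩) :=
    cfac_flip_right j hjn x (x + eaux n j)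
      (add_eaux_self' x ⟨j, by omega⟩ (by simp))
      (add_eaux_ne x ⟨j + 1, hjn⟩ (by simp))
  rw [e1, e2]

noncomputable def Vv (n i m : ℕ) : Fin n → Fin 2 :=
  ∑ k ∈ Finset.range (m + 1), eaux n (i + 2 * k)

/-- Core scalar identity, by induction on `m`. -/
lemma scalar_main (n i : ℕ) (hi : 1 ≤ i) :
    ∀ m : ℕ, ∀ hm : i + 2 * m + 1 ≤ n - 1, ∀ x : Fin n → Fin 2,
    ufun n x = zval (x ⟨i - 1, by omega⟩)
      * zval ((x + Vv n i m) ⟨i + 2 * m + 1, by omega⟩)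
      * ufun n (x + Vv n i m) := by
  intro m
  induction m with
  | zero =>
    intro hm x
    have hV : Vv n i 0 = eaux n i := by
      unfold Vv; rw [Finset.sum_range_one, Nat.mul_zero, Nat.add_zero]
    rw [hV]
    have h2 : (x + eaux n i) ⟨i + 2 * 0 + 1, by omega⟩ = x ⟨i + 1, by omega⟩ := by
      have hf : (⟨i + 2 * 0 + 1, by omega⟩ : Fin n) = ⟨i + 1, by omega⟩ := by
        apply Fin.ext; simp
      rw [hf]
      exact add_eaux_ne x ⟨i + 1, by omega⟩ (by simp)
    rw [h2]
    exact flip_one n i hi (by omega) x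
  | succ m ih =>
    intro hm x
    have hm' : i + 2 * m + 1 ≤ n - 1 := by omega
    have hVsucc : Vv n i (m + 1) = Vv n i m + eaux n (i + 2 * (m + 1)) := by
      unfold Vv; rw [Finset.sum_range_succ]
    have hxV : x + Vv n i (m + 1) = (x + Vv n i m) + eaux n (i + 2 * (m + 1)) := by
      rw [hVsucc, add_assoc]
    have hstep := flip_one n (i + 2 * (m + 1)) (by omega) (by omega) (x + Vv n i m)
    have hfin1 : (⟨i + 2 * (m + 1) - 1, by omega⟩ : Fin n)
        = (⟨i + 2 * m + 1, by omega⟩ : Fin n) := by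
      apply Fin.ext; simp; omega
    rw [hfin1] at hstep
    have hcoord : ((x + Vv n i (m + 1)) ⟨i + 2 * (m + 1) + 1, by omega⟩ : Fin 2)
        = (x + Vv n i m) ⟨i + 2 * (m + 1) + 1, by omega⟩ :=
      (congrFun hxV ⟨i + 2 * (m + 1) + 1, by omega⟩).trans
        (add_eaux_ne (x + Vv n i m) ⟨i + 2 * (m + 1) + 1, by omega⟩ (by simp))
    have hsq := zval_sq ((x + Vv n i m) ⟨i + 2 * m + 1, by omega⟩)
    have t3 : ufun n (x + Vv n i (m + 1))
        = ufun n ((x + Vv n i m) + eaux n (i + 2 * (m + 1))) := congrArg (ufun n) hxV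
    have t4 : zval ((x + Vv n i (m + 1)) ⟨i + 2 * (m + 1) + 1, by omega⟩)
        = zval ((x + Vv n i m) ⟨i + 2 * (m + 1) + 1, by omega⟩) := congrArg zval hcoord
    linear_combination (ih hm' x)
      + (zval (x ⟨i - 1, by omega⟩)
          * zval ((x + Vv n i m) ⟨i + 2 * m + 1, by omega⟩)) * hstep
      + (zval (x ⟨i - 1, by omega⟩)
          * zval ((x + Vv n i m) ⟨i + 2 * (m + 1) + 1, by omega⟩)
          * ufun n ((x + Vv n i m) + eaux n (i + 2 * (m + 1)))) * hsq
      - (zval (x ⟨i - 1, by omega⟩)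
          * zval ((x + Vv n i m) ⟨i + 2 * (m + 1) + 1, by omega⟩)) * t3
      - (zval (x ⟨i - 1, by omega⟩) * ufun n (x + Vv n i (m + 1))) * t4

/-! ### Converting `clusterU` and `stringS` to normal forms -/

lemma clusterU_eq (n : ℕ) : clusterU n = Matrix.diagonal (ufun n) := by
  unfold clusterU
  rw [attach_map_eq _ _ (fun j => Matrix.diagonal (fun x => cfac n j x))
    (by
      intro a ha
      rw [List.mem_range] at ha
      unfold CZ cfac
      simp only [dif_pos (show a + 1 < n by omega)])]
  rw [diag_list_prod]
  rfl

lemma stringS_eq (n i m : ℕ) (h : i + 2 * m + 1 ≤ n - 1) :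
    stringS n i m h = Tm (Vv n i m) := by
  unfold stringS
  rw [attach_map_eq _ _ (fun k => Tm (eaux n (i + 2 * k)))
    (by
      intro a ha
      rw [List.mem_range] at ha
      rw [siteOpX_eq]
      unfold eaux
      simp only [dif_pos (show i + 2 * a < n by omega)])]
  rw [Tm_list_prod]
  rfl

theorem statement8
    (n i m : ℕ) (hi : 1 ≤ i) (h : i + 2 * m + 1 ≤ n - 1) :
    clusterU n * stringS n i m h =
      (siteOp PauliZ (⟨i - 1, by omega⟩ : Fin n) * stringS n i m h *
        siteOp PauliZ (⟨i + 2 * m + 1, by omega⟩ : Fin n)) * clusterU n := by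
  rw [clusterU_eq, stringS_eq, siteOpZ_eq, siteOpZ_eq]
  funext x y
  rw [Matrix.mul_diagonal, Matrix.mul_diagonal, Matrix.diagonal_mul, Matrix.diagonal_mul]
  unfold Tm
  by_cases hy : y = x + Vv n i m
  · subst hy
    rw [if_pos rfl]
    have := scalar_main n i hi m h x
    rw [this]
    ring
  · rw [if_neg hy]
    ring
end

section
/- Let H be a complex Hilbert space, let Ω ∈ H with ‖Ω‖ = 1, and let A, B, C : H →L[ℂ] H be unitary operators. Suppose there are c, σ, τ ∈ ℂ such that A (B Ω) = c • Ω, C Ω = Ω, A ∘ C = σ • (C ∘ A) with σ ≠ 1, and B ∘ C = τ • (C ∘ B) with τ ≠ 1. Then |⟪Ω, A (B Ω)⟫ - ⟪Ω, A Ω⟫ · ⟪Ω, B Ω⟫| = 1; that is, the states exhibit maximal correlation between A and B. -/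
open ContinuousLinearMap

lemma unitary_norm_map
    {H : Type*} [NormedAddCommGroup H] [InnerProductSpace ℂ H] [CompleteSpace H]
    (A : H →L[ℂ] H) (hA : adjoint A ∘L A = 1) (x : H) : ‖A x‖ = ‖x‖ := by
  have h1 : (inner ℂ (A x) (A x) : ℂ) = inner ℂ x x := by
    rw [← ContinuousLinearMap.adjoint_inner_right]
    have : adjoint A (A x) = x := by
      have := congrFun (congrArg DFunLike.coe hA) x
      simpa using this
    rw [this]
  have h2 : ‖A x‖ ^ 2 = ‖x‖ ^ 2 := by
    rw [← @inner_self_eq_norm_sq ℂ, ← @inner_self_eq_norm_sq ℂ, h1]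
  nlinarith [norm_nonneg (A x), norm_nonneg x]

lemma zero_expect
    {H : Type*} [NormedAddCommGroup H] [InnerProductSpace ℂ H] [CompleteSpace H]
    (Ω : H) (A C : H →L[ℂ] H) (hC : adjoint C ∘L C = 1)
    (σ : ℂ) (hCΩ : C Ω = Ω) (hσ : σ ≠ 1) (hAC : A ∘L C = σ • (C ∘L A)) :
    (inner ℂ Ω (A Ω) : ℂ) = 0 := by
  have hCadj : adjoint C Ω = Ω := by
    have := congrFun (congrArg DFunLike.coe hC) Ω
    simpa [hCΩ] using this
  have h1 : A Ω = σ • C (A Ω) := by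
    have := congrFun (congrArg DFunLike.coe hAC) Ω
    simpa [hCΩ] using this
  have h2 : (inner ℂ Ω (A Ω) : ℂ) = σ * inner ℂ Ω (A Ω) := by
    conv_lhs => rw [h1]
    rw [inner_smul_right, ← ContinuousLinearMap.adjoint_inner_left, hCadj]
  have h3 : (1 - σ) * (inner ℂ Ω (A Ω) : ℂ) = 0 := by ring_nf; linear_combination h2
  rcases mul_eq_zero.mp h3 with h | h
  · exact absurd (by linear_combination -h) hσ
  · exact h

/-- Let `Ω` be a unit vector, `A`, `B`, `C` unitaries with
`A (B Ω) = c • Ω`, `C Ω = Ω`, `A ∘ C = σ • (C ∘ A)` with `σ ≠ 1` and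
`B ∘ C = τ • (C ∘ B)` with `τ ≠ 1`. Then
`|⟪Ω, A (B Ω)⟫ - ⟪Ω, A Ω⟫ ⟪Ω, B Ω⟫| = 1`: the state exhibits maximal correlation
between `A` and `B`. -/
theorem statement12
    {H : Type*} [NormedAddCommGroup H] [InnerProductSpace ℂ H] [CompleteSpace H]
    (Ω : H) (hΩ : ‖Ω‖ = 1) (A B C : H →L[ℂ] H)
    (hA : adjoint A ∘L A = 1 ∧ A ∘L adjoint A = 1)
    (hB : adjoint B ∘L B = 1 ∧ B ∘L adjoint B = 1)
    (hC : adjoint C ∘L C = 1 ∧ C ∘L adjoint C = 1)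
    (c σ τ : ℂ)
    (hABΩ : A (B Ω) = c • Ω)
    (hCΩ : C Ω = Ω)
    (hσ : σ ≠ 1) (hAC : A ∘L C = σ • (C ∘L A))
    (hτ : τ ≠ 1) (hBC : B ∘L C = τ • (C ∘L B)) :
    ‖(inner ℂ Ω (A (B Ω)) : ℂ) - (inner ℂ Ω (A Ω) : ℂ) * (inner ℂ Ω (B Ω) : ℂ)‖ = 1 := by
  have hAz := zero_expect Ω A C hC.1 σ hCΩ hσ hAC
  have hBz := zero_expect Ω B C hC.1 τ hCΩ hτ hBC
  have hInner : (inner ℂ Ω (A (B Ω)) : ℂ) = c := by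
    rw [hABΩ, inner_smul_right, inner_self_eq_norm_sq_to_K, hΩ]
    norm_num
  have hc : ‖c‖ = 1 := by
    have h1 : ‖A (B Ω)‖ = 1 := by
      rw [unitary_norm_map A hA.1, unitary_norm_map B hB.1, hΩ]
    rw [hABΩ, norm_smul, hΩ, mul_one] at h1
    exact h1
  rw [hInner, hAz, hBz, zero_mul, sub_zero, hc]
end

section
/- Let A be a unital C*-algebra, H a complex Hilbert space, and π : A → (H →L[ℂ] H) a unital star-algebra homomorphism whose commutant is trivial, i.e. every bounded operator T on H satisfying T ∘ π(a) = π(a) ∘ T for all a ∈ A is a scalar multiple of the identity. If Ω, Ω' ∈ H are unit vectors inducing the same state, i.e. ⟪Ω, π(a) Ω⟫ = ⟪Ω', π(a) Ω'⟫ for all a ∈ A, then there exists c ∈ ℂ with |c| = 1 such that Ω' = c • Ω. -/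
open ContinuousLinearMap

/-- Let `π` be a unital star-algebra representation of a unital
C*-algebra `A` on a complex Hilbert space `H` with trivial commutant (i.e. an
irreducible representation). If two unit vectors `Ω`, `Ω'` induce the same state,
then they agree up to a phase. -/
theorem statement13
    {A : Type*} [NormedRing A] [StarRing A] [CStarRing A] [CompleteSpace A]
    [NormedAlgebra ℂ A] [StarModule ℂ A]
    {H : Type*} [NormedAddCommGroup H] [InnerProductSpace ℂ H] [CompleteSpace H]
    (π : A →⋆ₐ[ℂ] (H →L[ℂ] H))
    (hirr : ∀ T : H →L[ℂ] H, (∀ a : A, T ∘L π a = π a ∘L T) → ∃ z : ℂ, T = z • 1)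
    (Ω Ω' : H) (hΩ : ‖Ω‖ = 1) (hΩ' : ‖Ω'‖ = 1)
    (hstate : ∀ a : A, (inner ℂ Ω (π a Ω) : ℂ) = inner ℂ Ω' (π a Ω')) :
    ∃ c : ℂ, ‖c‖ = 1 ∧ Ω' = c • Ω := by
  classical
  -- orbit maps
  let ℓ : A →ₗ[ℂ] H :=
    { toFun := fun a => π a Ω
      map_add' := fun a b => by simp [map_add]
      map_smul' := fun c a => by simp [map_smul] }
  let ℓ' : A →ₗ[ℂ] H :=
    { toFun := fun a => π a Ω'
      map_add' := fun a b => by simp [map_add]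
      map_smul' := fun c a => by simp [map_smul] }
  have hℓ : ∀ a : A, ℓ a = π a Ω := fun _ => rfl
  have hℓ' : ∀ a : A, ℓ' a = π a Ω' := fun _ => rfl
  -- the orbit of Ω and its closure
  set S : Submodule ℂ H := LinearMap.range ℓ with hS
  set K : Submodule ℂ H := S.topologicalClosure with hK
  haveI : CompleteSpace K := S.isClosed_topologicalClosure.completeSpace_coe
  -- S and K are invariant under π a
  have hSinv : ∀ a : A, ∀ x ∈ S, π a x ∈ S := by
    rintro a x ⟨b, rfl⟩
    exact ⟨a * b, by simp [hℓ, map_mul]⟩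
  have hKinv : ∀ a : A, ∀ x ∈ K, π a x ∈ K := by
    intro a x hx
    have hmt : Set.MapsTo (π a) (S : Set H) (S : Set H) := fun y hy => hSinv a y hy
    have := hmt.closure (π a).continuous
    exact
      this (by rw [← Submodule.topologicalClosure_coe]; exact hx)
  -- Kᗮ is invariant
  have hKorth : ∀ a : A, ∀ x ∈ Kᗮ, π a x ∈ Kᗮ := by
    intro a x hx
    rw [Submodule.mem_orthogonal]
    intro v hv
    have hadj : π (star a) = ContinuousLinearMap.adjoint (π a) := by
      rw [map_star, ContinuousLinearMap.star_eq_adjoint]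
    have : (inner ℂ v (π a x) : ℂ) = inner ℂ (π (star a) v) x := by
      rw [hadj, ← ContinuousLinearMap.adjoint_inner_left]
    rw [this]
    exact (Submodule.mem_orthogonal K x).mp hx _ (hKinv (star a) v hv)
  -- the orthogonal projection onto K commutes with π
  let P : H →L[ℂ] H := K.subtypeL ∘L Submodule.orthogonalProjectionOnto K
  have hPmem : ∀ x : H, P x ∈ K := fun x => (Submodule.orthogonalProjectionOnto K x).2
  have hPK : ∀ x ∈ K, P x = x := fun x hx => K.starProjection_eq_self_iff.mpr hx
  have hP0 : ∀ x ∈ Kᗮ, P x = 0 := by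
    intro x hx
    have : Submodule.orthogonalProjectionOnto K x = 0 :=
      Submodule.orthogonalProjectionOnto_apply_of_mem_orthogonal hx
    simp [P, this]
  have hPcomm : ∀ a : A, P ∘L π a = π a ∘L P := by
    intro a
    ext x
    have hdx : x - P x ∈ Kᗮ := K.sub_starProjection_mem_orthogonal x
    have hsplit : π a x = π a (P x) + π a (x - P x) := by
      rw [← map_add]; congr 1; abel
    simp only [ContinuousLinearMap.comp_apply]
    rw [hsplit, map_add, hPK _ (hKinv a _ (hPmem x)), hP0 _ (hKorth a _ hdx), add_zero]
  obtain ⟨z, hz⟩ := hirr P hPcomm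
  have hΩne : Ω ≠ 0 := by intro h; rw [h, norm_zero] at hΩ; exact one_ne_zero hΩ.symm
  have hΩS : Ω ∈ S := ⟨1, by simp [hℓ, map_one]⟩
  have hΩK : Ω ∈ K := S.le_topologicalClosure hΩS
  have hz1 : z = 1 := by
    have h1 : P Ω = Ω := hPK Ω hΩK
    rw [hz] at h1
    simp only [ContinuousLinearMap.smul_apply, ContinuousLinearMap.one_apply] at h1
    have : (z - 1) • Ω = 0 := by rw [sub_smul, one_smul, h1, sub_self]
    rcases smul_eq_zero.mp this with h | h
    · exact sub_eq_zero.mp h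
    · exact absurd h hΩne
  -- hence K = ⊤, so S is dense
  have hKtop : K = ⊤ := by
    rw [Submodule.eq_top_iff']
    intro x
    have : P x = x := by rw [hz, hz1]; simp
    rw [← this]; exact hPmem x
  have hdense : DenseRange (S.subtypeL : S →L[ℂ] H) := by
    have hd : Dense (S : Set H) := Submodule.dense_iff_topologicalClosure_eq_top.mpr hKtop
    have : Set.range ((↑) : S → H) = (S : Set H) := Subtype.range_coe
    simpa [DenseRange, this] using hd
  have hui : IsUniformInducing (S.subtypeL : S →L[ℂ] H) :=
    isometry_subtype_coe.isUniformInducing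
  -- the two orbits are isometric
  have normkey : ∀ a : A, ‖π a Ω‖ = ‖π a Ω'‖ := by
    intro a
    have hadj : π (star a) = ContinuousLinearMap.adjoint (π a) := by
      rw [map_star, ContinuousLinearMap.star_eq_adjoint]
    have h1 : (inner ℂ (π a Ω) (π a Ω) : ℂ) = inner ℂ Ω (π (star a * a) Ω) := by
      rw [map_mul, ContinuousLinearMap.mul_apply, hadj,
        ContinuousLinearMap.adjoint_inner_right]
    have h2 : (inner ℂ (π a Ω') (π a Ω') : ℂ) = inner ℂ Ω' (π (star a * a) Ω') := by
      rw [map_mul, ContinuousLinearMap.mul_apply, hadj,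
        ContinuousLinearMap.adjoint_inner_right]
    have h3 : (inner ℂ (π a Ω) (π a Ω) : ℂ) = inner ℂ (π a Ω') (π a Ω') := by
      rw [h1, h2, hstate]
    rw [inner_self_eq_norm_sq_to_K, inner_self_eq_norm_sq_to_K] at h3
    have h4 : (‖π a Ω‖ : ℝ) ^ 2 = ‖π a Ω'‖ ^ 2 := by exact_mod_cast h3
    have := congrArg Real.sqrt h4
    rwa [Real.sqrt_sq (norm_nonneg _), Real.sqrt_sq (norm_nonneg _)] at this
  have hker : LinearMap.ker ℓ ≤ LinearMap.ker ℓ' := by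
    intro a ha
    rw [LinearMap.mem_ker] at ha ⊢
    have := normkey a
    rw [show π a Ω = ℓ a from rfl, ha, norm_zero] at this
    rw [hℓ']
    exact norm_eq_zero.mp this.symm
  -- the densely-defined intertwiner
  let q : (A ⧸ LinearMap.ker ℓ) →ₗ[ℂ] H := (LinearMap.ker ℓ).liftQ ℓ' hker
  let U₀ : S →ₗ[ℂ] H := q ∘ₗ (ℓ.quotKerEquivRange.symm : S →ₗ[ℂ] (A ⧸ LinearMap.ker ℓ))
  have hU₀ : ∀ (a : A) (h : ℓ a ∈ S), U₀ ⟨ℓ a, h⟩ = ℓ' a := by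
    intro a h
    have hsymm : ℓ.quotKerEquivRange.symm ⟨ℓ a, h⟩ = Submodule.Quotient.mk a :=
      ℓ.quotKerEquivRange_symm_apply_image a h
    show q (ℓ.quotKerEquivRange.symm ⟨ℓ a, h⟩) = ℓ' a
    rw [hsymm]
    exact Submodule.liftQ_apply _ _ _
  have hU₀norm : ∀ s : S, ‖U₀ s‖ = ‖s‖ := by
    rintro ⟨x, a, rfl⟩
    rw [hU₀ a ⟨a, rfl⟩]
    exact (normkey a).symm
  let U₀c : S →L[ℂ] H :=
    U₀.mkContinuous 1 (fun s => by rw [hU₀norm s, one_mul])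
  let U : H →L[ℂ] H := U₀c.extend S.subtypeL
  have hUval : ∀ a : A, U (π a Ω) = π a Ω' := by
    intro a
    have h : ℓ a ∈ S := ⟨a, rfl⟩
    have h1 : U (S.subtypeL ⟨ℓ a, h⟩) = U₀c ⟨ℓ a, h⟩ :=
      ContinuousLinearMap.extend_eq U₀c hdense hui ⟨ℓ a, h⟩
    have h2 : U₀c ⟨ℓ a, h⟩ = ℓ' a := hU₀ a h
    rw [h2] at h1
    exact h1
  have hUcomm : ∀ a : A, U ∘L π a = π a ∘L U := by
    intro a
    apply ContinuousLinearMap.coeFn_injective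
    refine hdense.equalizer (U ∘L π a).continuous ((π a) ∘L U).continuous ?_
    funext s
    obtain ⟨x, b, rfl⟩ := s
    simp only [Function.comp_apply, ContinuousLinearMap.comp_apply]
    show U (π a (ℓ b)) = π a (U (ℓ b))
    have e1 : π a (π b Ω) = π (a * b) Ω := by rw [map_mul]; rfl
    have e2 : π a (π b Ω') = π (a * b) Ω' := by rw [map_mul]; rfl
    rw [hℓ, hUval b, e1, hUval (a * b), ← e2]
  obtain ⟨c, hc⟩ := hirr U hUcomm
  have hUΩ : U Ω = Ω' := by
    have := hUval 1
    simpa [map_one] using this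
  have hΩ'c : Ω' = c • Ω := by
    rw [← hUΩ, hc]
    simp
  refine ⟨c, ?_, hΩ'c⟩
  have : ‖Ω'‖ = ‖c‖ * ‖Ω‖ := by rw [hΩ'c, norm_smul]
  rw [hΩ, hΩ', mul_one] at this
  exact this.symm
end
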